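/- Let 0 < α₁ ≤ 1, c > 0, λ = 2 + 2α₁, and for θ ∈ ℂ let φ(θ) = λ + c² − 2α₁ cos θ. If |α₁ cos θ| < λ/2 + c²/2 − 1, then φ(θ)² − 4 is not a negative real number, i.e. φ(θ)² − 4 ∉ {x ∈ ℝ : x < 0}. -/

import Mathlib

/-- If `|α₁ cos θ| < λ/2 + c²/2 − 1` then `φ(θ)² − 4` is not a negative real number,
where `φ(θ) = λ + c² − 2α₁ cos θ` (complex cosine). -/
theorem stmt12 (α₁ c : ℝ) (hα₀ : 0 < α₁) (hα₁ : α₁ ≤ 1) (hc : 0 < c) (θ : ℂ)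
    (h : ‖(α₁ : ℂ) * Complex.cos θ‖ < (2 + 2 * α₁) / 2 + c ^ 2 / 2 - 1) :
    ∀ x : ℝ, x < 0 →
      ((2 + 2 * α₁ + c ^ 2 : ℂ) - 2 * (α₁ : ℂ) * Complex.cos θ) ^ 2 - 4 ≠ (x : ℂ) := by
  intro x hx heq
  set z : ℂ := (α₁ : ℂ) * Complex.cos θ with hz
  have hre : z.re < (2 + 2 * α₁) / 2 + c ^ 2 / 2 - 1 :=
    lt_of_le_of_lt (Complex.re_le_norm z) h
  set φ : ℂ := (2 + 2 * α₁ + c ^ 2 : ℂ) - 2 * z with hφ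
  have hφre : 2 < φ.re := by
    simp only [hφ, Complex.sub_re, Complex.add_re, Complex.mul_re, Complex.ofReal_re,
      Complex.ofReal_im, Complex.re_ofNat, Complex.im_ofNat, Complex.mul_im,
      Complex.one_re, Complex.one_im, ← Complex.ofReal_pow]
    linarith
  have hsq : φ ^ 2 = (x : ℂ) + 4 := by
    rw [hφ, hz]; linear_combination heq
  have him : φ.re = 0 ∨ φ.im = 0 := by
    have := congrArg Complex.im hsq
    simpa [sq, Complex.mul_im, mul_comm, two_mul] using this
  have hb : φ.im = 0 := by
    rcases him with h1 | h1
    · nlinarith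
    · exact h1
  have hre2 : φ.re ^ 2 - φ.im ^ 2 = x + 4 := by
    have := congrArg Complex.re hsq
    simpa [sq, Complex.mul_re] using this
  nlinarith
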